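/- On the space of 3×3 Hermitian octonion matrices with the Jordan product X∘Y = (XY+YX)/2, the bilinear form (X,Y) = tr(X∘Y) is symmetric and positive definite. -/

import Mathlib

/-- The octonions, via the Cayley–Dickson construction over the quaternions. -/
def Octonion : Type := Quaternion ℝ × Quaternion ℝ

noncomputable instance : AddCommGroup Octonion := inferInstanceAs (AddCommGroup (Quaternion ℝ × Quaternion ℝ))
noncomputable instance : Module ℝ Octonion := inferInstanceAs (Module ℝ (Quaternion ℝ × Quaternion ℝ))

/-- Cayley–Dickson multiplication on the octonions. -/
noncomputable instance : Mul Octonion :=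
  ⟨fun p q => (p.1 * q.1 - star q.2 * p.2, q.2 * p.1 + p.2 * star q.1)⟩

/-- Octonion conjugation. -/
instance : Star Octonion := ⟨fun p => (star p.1, -p.2)⟩

/-- The real part of an octonion. -/
def Octonion.re (p : Octonion) : ℝ := p.1.re

/-- Matrix multiplication for `3 × 3` octonion matrices. -/
noncomputable def omul (X Y : Matrix (Fin 3) (Fin 3) Octonion) : Matrix (Fin 3) (Fin 3) Octonion :=
  fun i j => ∑ k : Fin 3, X i k * Y k j

/-- The Jordan product `X ∘ Y = ½(XY + YX)`. -/
noncomputable def jord (X Y : Matrix (Fin 3) (Fin 3) Octonion) : Matrix (Fin 3) (Fin 3) Octonion :=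
  (1 / 2 : ℝ) • (omul X Y + omul Y X)

/-- The (real) trace, the sum of the real diagonal entries. -/
def trR (X : Matrix (Fin 3) (Fin 3) Octonion) : ℝ := ∑ i : Fin 3, (X i i).re

/-- A `3 × 3` octonion matrix is Hermitian if its conjugate transpose is itself. -/
def OHermitian (X : Matrix (Fin 3) (Fin 3) Octonion) : Prop :=
  ∀ i j, X i j = star (X j i)

section aux

lemma oct_re_add (p q : Octonion) : (p + q).re = p.re + q.re := rfl

lemma oct_re_smul (r : ℝ) (p : Octonion) : (r • p).re = r * p.re := rfl

lemma oct_mul_star_re (p : Octonion) :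
    (p * star p).re = Quaternion.normSq p.1 + Quaternion.normSq p.2 := by
  show ((p.1 * star p.1 - star (-p.2) * p.2 : Quaternion ℝ)).re = _
  simp [Quaternion.self_mul_star, Quaternion.star_mul_self, sub_eq_add_neg]

lemma oct_mul_star_re_nonneg (p : Octonion) : 0 ≤ (p * star p).re := by
  rw [oct_mul_star_re]
  exact add_nonneg Quaternion.normSq_nonneg Quaternion.normSq_nonneg

lemma oct_mul_star_re_pos (p : Octonion) (hp : p ≠ 0) : 0 < (p * star p).re := by
  rw [oct_mul_star_re]
  have h1 : p.1 ≠ 0 ∨ p.2 ≠ 0 := by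
    by_contra hc
    push_neg at hc
    exact hp (Prod.ext hc.1 hc.2)
  have n1 : (0:ℝ) ≤ Quaternion.normSq p.1 := Quaternion.normSq_nonneg
  have n2 : (0:ℝ) ≤ Quaternion.normSq p.2 := Quaternion.normSq_nonneg
  rcases h1 with h1 | h1
  · have : Quaternion.normSq p.1 ≠ 0 := fun h => h1 (Quaternion.normSq_eq_zero.mp h)
    have := lt_of_le_of_ne n1 (Ne.symm this)
    linarith
  · have : Quaternion.normSq p.2 ≠ 0 := fun h => h1 (Quaternion.normSq_eq_zero.mp h)
    have := lt_of_le_of_ne n2 (Ne.symm this)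
    linarith

lemma trR_jord_self (X : Matrix (Fin 3) (Fin 3) Octonion) (hX : OHermitian X) :
    trR (jord X X) = ∑ i : Fin 3, ∑ k : Fin 3, (X i k * star (X i k)).re := by
  unfold trR jord omul
  simp only [Matrix.smul_apply, Matrix.add_apply, oct_re_smul, oct_re_add]
  apply Finset.sum_congr rfl
  intro i _
  have : (∑ k : Fin 3, X i k * X k i).re = ∑ k : Fin 3, (X i k * star (X i k)).re := by
    have key : ∀ (s : Finset (Fin 3)), (∑ k ∈ s, X i k * X k i).re = ∑ k ∈ s, (X i k * star (X i k)).re := by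
      intro s
      induction s using Finset.induction with
      | empty => rfl
      | insert a s h ih =>
        rw [Finset.sum_insert h, Finset.sum_insert h, oct_re_add, ih, hX _ i]
    exact key Finset.univ
  show 1 / 2 * ((∑ k : Fin 3, X i k * X k i) + (∑ k : Fin 3, X i k * X k i)).re = _
  rw [oct_re_add, this]
  ring

end aux

/-- On `3 × 3` Hermitian octonion matrices, the bilinear form
`(X,Y) = tr(X ∘ Y)` is symmetric and positive definite. -/
theorem stmt11 :
    (∀ X Y : Matrix (Fin 3) (Fin 3) Octonion, OHermitian X → OHermitian Y →
      trR (jord X Y) = trR (jord Y X)) ∧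
    (∀ X : Matrix (Fin 3) (Fin 3) Octonion, OHermitian X → X ≠ 0 →
      0 < trR (jord X X)) := by
  constructor
  · intro X Y _ _
    unfold jord
    rw [add_comm]
  · intro X hX hX0
    rw [trR_jord_self X hX]
    have h1 : ∃ i j, X i j ≠ 0 := by
      by_contra hc
      push_neg at hc
      exact hX0 (by funext i j; exact hc i j)
    obtain ⟨i0, j0, hij⟩ := h1
    exact Finset.sum_pos' (fun i _ => Finset.sum_nonneg fun k _ => oct_mul_star_re_nonneg _)
      ⟨i0, Finset.mem_univ _, Finset.sum_pos' (fun k _ => oct_mul_star_re_nonneg _)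
        ⟨j0, Finset.mem_univ _, oct_mul_star_re_pos _ hij⟩⟩
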